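/- Let Λ ∈ (0, ∞), N ∈ ℕ, φ : (0, Λ] → ℂ absolutely integrable, and a_0, …, a_N ∈ ℂ with φ(x) − Σ_{k=0}^{N} a_k x^k = O(x^{N+1}) as x → 0⁺, and let G(λ) := ∫_0^Λ x^λ (φ(x) − Σ_{k=0}^{N} a_k x^k) dx + Σ_{k=0}^{N} a_k Λ^{λ+k+1}/(λ+k+1). Then for every k ∈ {1, …, N+1}, the analytic continuation G of λ ↦ ∫_0^Λ x^λ φ(x) dx has a simple pole at λ = −k with residue a_{k−1}; that is, lim_{λ → −k} (λ + k) · G(λ) = a_{k−1}. -/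

import Mathlib

open MeasureTheory Complex Filter

/-- The analytic continuation `G` of `λ ↦ ∫_0^Λ x^λ φ(x) dx` has, for every
`k ∈ {1, …, N+1}`, a simple pole at `λ = −k` with residue `a_{k−1}`:
`lim_{λ → −k} (λ + k) G(λ) = a_{k−1}`. -/
theorem stmt2 (Λ : ℝ) (hΛ : 0 < Λ) (N : ℕ) (φ : ℝ → ℂ) (a : ℕ → ℂ)
    (hφ : IntegrableOn φ (Set.Ioc 0 Λ))
    (hasymp : (fun x : ℝ => φ x - ∑ k ∈ Finset.range (N + 1), a k * (x : ℂ) ^ k)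
      =O[nhdsWithin 0 (Set.Ioi 0)] fun x : ℝ => x ^ (N + 1))
    (G : ℂ → ℂ)
    (hG : ∀ l : ℂ, G l =
      (∫ x in Set.Ioc (0 : ℝ) Λ,
          (x : ℂ) ^ l * (φ x - ∑ k ∈ Finset.range (N + 1), a k * (x : ℂ) ^ k))
        + ∑ k ∈ Finset.range (N + 1),
            a k * (Λ : ℂ) ^ (l + (k : ℂ) + 1) / (l + (k : ℂ) + 1)) :
    ∀ k : ℕ, 1 ≤ k → k ≤ N + 1 →
      Filter.Tendsto (fun l : ℂ => (l + (k : ℂ)) * G l)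
        (nhdsWithin (-(k : ℂ)) {(-(k : ℂ))}ᶜ) (nhds (a (k - 1))) := by
  intro k hk1 hk2
  set f : ℝ → ℂ := fun x => φ x - ∑ j ∈ Finset.range (N + 1), a j * (x : ℂ) ^ j with hf
  -- integrability of f
  have hpoly : Continuous fun x : ℝ => ∑ j ∈ Finset.range (N + 1), a j * (x : ℂ) ^ j := by
    fun_prop
  have hfint : IntegrableOn f (Set.Ioc 0 Λ) := hφ.sub (hpoly.integrableOn_Ioc)
  -- big O bound
  obtain ⟨C, hC0, hCbd⟩ := hasymp.exists_pos
  have hbd := hCbd.bound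
  rw [eventually_nhdsWithin_iff, Metric.eventually_nhds_iff] at hbd
  obtain ⟨ε, hε, hbd⟩ := hbd
  set δ : ℝ := min ε 1 with hδdef
  have hδ0 : 0 < δ := lt_min hε one_pos
  have hδ1 : δ ≤ 1 := min_le_right _ _
  set ν' : ℝ := -(k : ℝ) - 1/2 with hν'
  set ν : ℝ := ((N : ℝ) + 1) + ν' with hν
  have hν_gt : (-1 : ℝ) < ν := by
    have : (k : ℝ) ≤ (N : ℝ) + 1 := by exact_mod_cast hk2
    simp only [hν, hν']
    linarith
  set M : ℝ := δ ^ ν' with hM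
  have hM0 : 0 ≤ M := Real.rpow_nonneg hδ0.le _
  set g : ℝ → ℝ := fun x => C * x ^ ν + M * ‖f x‖ with hg
  have hgint : IntegrableOn g (Set.Ioc 0 Λ) := by
    apply Integrable.add
    · exact (intervalIntegral.intervalIntegrable_rpow' hν_gt).1.const_mul C
    · exact (hfint.norm.const_mul M)
  -- key pointwise bound
  have key : ∀ l : ℂ, ν' ≤ l.re → l.re ≤ -(k : ℝ) + 1/2 →
      ∀ x ∈ Set.Ioc (0 : ℝ) Λ, ‖(x : ℂ) ^ l * f x‖ ≤ g x := by
    intro l hl1 hl2 x hx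
    have hx0 : 0 < x := hx.1
    have hlre_neg : l.re ≤ 0 := by
      have : (1 : ℝ) ≤ (k : ℝ) := by exact_mod_cast hk1
      linarith
    have hnorm : ‖(x : ℂ) ^ l * f x‖ = x ^ l.re * ‖f x‖ := by
      rw [norm_mul, Complex.norm_cpow_eq_rpow_re_of_pos hx0]
    rw [hnorm]
    rcases lt_or_ge x δ with hxδ | hxδ
    · -- small x : use the O bound
      have hfx : ‖f x‖ ≤ C * x ^ (N + 1 : ℕ) := by
        have := hbd (by rw [Real.dist_eq, sub_zero, abs_of_pos hx0]
                        exact hxδ.trans_le (min_le_left _ _)) hx0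
        simpa [abs_of_pos hx0] using this
      have hx1 : x ≤ 1 := hxδ.le.trans hδ1
      have h1 : x ^ l.re ≤ x ^ ν' := Real.rpow_le_rpow_of_exponent_ge hx0 hx1 hl1
      calc x ^ l.re * ‖f x‖ ≤ x ^ ν' * (C * x ^ (N + 1 : ℕ)) := by
            apply mul_le_mul h1 hfx (norm_nonneg _) (Real.rpow_nonneg hx0.le _)
        _ = C * x ^ ν := by
            rw [hν, Real.rpow_add hx0, ← Real.rpow_natCast x (N + 1)]
            push_cast
            ring
        _ ≤ g x := by
            have : 0 ≤ M * ‖f x‖ := mul_nonneg hM0 (norm_nonneg _)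
            simp only [hg]
            linarith
    · -- x ≥ δ : use constant bound on x ^ l.re
      have h1 : x ^ l.re ≤ δ ^ l.re := Real.rpow_le_rpow_of_nonpos hδ0 hxδ hlre_neg
      have h2 : δ ^ l.re ≤ δ ^ ν' := Real.rpow_le_rpow_of_exponent_ge hδ0 hδ1 hl1
      calc x ^ l.re * ‖f x‖ ≤ M * ‖f x‖ := by
            apply mul_le_mul_of_nonneg_right (h1.trans h2) (norm_nonneg _)
        _ ≤ g x := by
            have : 0 ≤ C * x ^ ν := mul_nonneg hC0.le (Real.rpow_nonneg hx0.le _)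
            simp only [hg]; linarith
  -- integral part bounded
  set B : ℝ := ∫ x in Set.Ioc (0 : ℝ) Λ, g x with hB
  set I : ℂ → ℂ := fun l => ∫ x in Set.Ioc (0 : ℝ) Λ, (x : ℂ) ^ l * f x with hI
  have hIbd : ∀ l : ℂ, ν' ≤ l.re → l.re ≤ -(k : ℝ) + 1/2 → ‖I l‖ ≤ B := by
    intro l hl1 hl2
    refine (norm_integral_le_integral_norm _).trans ?_
    apply integral_mono_of_nonneg
    · filter_upwards with x using norm_nonneg _
    · exact hgint
    · filter_upwards [ae_restrict_mem measurableSet_Ioc] with x hx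
      exact key l hl1 hl2 x hx
  -- eventual real-part bound
  have hev : ∀ᶠ l : ℂ in nhdsWithin (-(k : ℂ)) {(-(k : ℂ))}ᶜ,
      ν' ≤ l.re ∧ l.re ≤ -(k : ℝ) + 1/2 := by
    have h2 : ∀ᶠ l : ℂ in nhds (-(k : ℂ)), ν' ≤ l.re ∧ l.re ≤ -(k : ℝ) + 1/2 := by
      have hball := Metric.ball_mem_nhds (-(k : ℂ)) (by norm_num : (0:ℝ) < 1/2)
      filter_upwards [hball] with l hl
      rw [Metric.mem_ball, dist_eq_norm, sub_neg_eq_add] at hl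
      have hre : |l.re + (k : ℝ)| ≤ ‖l + (k : ℂ)‖ := by
        have := Complex.abs_re_le_norm (l + (k : ℂ))
        simpa using this
      have := hre.trans hl.le
      rw [abs_le] at this
      exact ⟨by rw [hν']; linarith [this.1], by linarith [this.2]⟩
    exact nhdsWithin_le_nhds h2
  -- Part A: (l+k) * I l → 0
  have hA : Tendsto (fun l : ℂ => (l + (k : ℂ)) * I l)
      (nhdsWithin (-(k : ℂ)) {(-(k : ℂ))}ᶜ) (nhds 0) := by
    have hbound : ∀ᶠ l : ℂ in nhdsWithin (-(k : ℂ)) {(-(k : ℂ))}ᶜ,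
        ‖(l + (k : ℂ)) * I l‖ ≤ ‖l + (k : ℂ)‖ * B := by
      filter_upwards [hev] with l hl
      rw [norm_mul]
      exact mul_le_mul_of_nonneg_left (hIbd l hl.1 hl.2) (norm_nonneg _)
    refine squeeze_zero_norm' hbound ?_
    have h1 : Tendsto (fun l : ℂ => ‖l + (k : ℂ)‖)
          (nhdsWithin (-(k : ℂ)) {(-(k : ℂ))}ᶜ) (nhds 0) := by
        have : Tendsto (fun l : ℂ => ‖l + (k : ℂ)‖) (nhds (-(k : ℂ))) (nhds ‖(-(k:ℂ)) + (k:ℂ)‖) := by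
          exact (continuous_id.add continuous_const).norm.tendsto _
        simpa using this.mono_left nhdsWithin_le_nhds
    simpa using h1.mul_const B
  -- Part B: sum part
  have hkC : ((k - 1 : ℕ) : ℂ) + 1 = (k : ℂ) := by
    have : (k - 1) + 1 = k := Nat.succ_pred_eq_of_pos hk1
    exact_mod_cast congrArg (Nat.cast : ℕ → ℂ) this
  have hB' : Tendsto (fun l : ℂ => ∑ j ∈ Finset.range (N + 1),
        (l + (k : ℂ)) * (a j * (Λ : ℂ) ^ (l + (j : ℂ) + 1) / (l + (j : ℂ) + 1)))
      (nhdsWithin (-(k : ℂ)) {(-(k : ℂ))}ᶜ) (nhds (a (k - 1))) := by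
    have hsum : a (k - 1) = ∑ j ∈ Finset.range (N + 1),
        (if j = k - 1 then a (k - 1) else 0) := by
      have hmem : k - 1 ∈ Finset.range (N + 1) := Finset.mem_range.mpr (by omega)
      rw [Finset.sum_ite_eq' (Finset.range (N + 1)) (k - 1) (fun _ => a (k - 1)), if_pos hmem]
    rw [hsum]
    apply tendsto_finset_sum
    intro j hj
    by_cases hjk : j = k - 1
    · simp only [hjk, if_pos rfl]
      -- on punctured nbhd the function equals a (k-1) * Λ ^ (l + k)
      have heq : ∀ᶠ l : ℂ in nhdsWithin (-(k : ℂ)) {(-(k : ℂ))}ᶜ,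
          a (k-1) * (Λ : ℂ) ^ (l + (k : ℂ)) =
          (l + (k : ℂ)) * (a (k-1) * (Λ : ℂ) ^ (l + ((k-1 : ℕ) : ℂ) + 1) / (l + ((k-1 : ℕ) : ℂ) + 1)) := by
        filter_upwards [self_mem_nhdsWithin] with l hl
        have hlne : l + (k : ℂ) ≠ 0 := by
          intro h
          apply hl
          simp only [Set.mem_compl_iff, Set.mem_singleton_iff, not_not]
          linear_combination h
        rw [add_assoc, hkC]
        field_simp
      apply Tendsto.congr' heq
      have hcont : Tendsto (fun l : ℂ => a (k-1) * (Λ : ℂ) ^ (l + (k : ℂ)))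
          (nhds (-(k : ℂ))) (nhds (a (k-1) * (Λ : ℂ) ^ ((-(k:ℂ)) + (k : ℂ)))) := by
        apply Tendsto.const_mul
        have hΛne : (Λ : ℂ) ≠ 0 := Complex.ofReal_ne_zero.mpr hΛ.ne'
        exact ((continuous_const.cpow (continuous_id.add continuous_const)
          (fun _ => Or.inl (by simpa using hΛ))).tendsto _)
      have : a (k-1) * (Λ : ℂ) ^ ((-(k:ℂ)) + (k : ℂ)) = a (k-1) := by
        simp
      rw [this] at hcont
      exact hcont.mono_left nhdsWithin_le_nhds
    · simp only [if_neg hjk]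
      have hden : (-(k : ℂ)) + (j : ℂ) + 1 ≠ 0 := by
        intro h
        apply hjk
        have : (j : ℂ) + 1 = (k : ℂ) := by linear_combination h
        have : (j : ℕ) + 1 = k := by exact_mod_cast this
        omega
      have hcont : Tendsto (fun l : ℂ => (l + (k : ℂ)) * (a j * (Λ : ℂ) ^ (l + (j : ℂ) + 1) / (l + (j : ℂ) + 1)))
          (nhds (-(k : ℂ)))
          (nhds ((-(k:ℂ) + (k : ℂ)) * (a j * (Λ : ℂ) ^ (-(k:ℂ) + (j : ℂ) + 1) / (-(k:ℂ) + (j : ℂ) + 1)))) := by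
        have hΛne : (Λ : ℂ) ≠ 0 := Complex.ofReal_ne_zero.mpr hΛ.ne'
        apply Tendsto.mul
        · exact (continuous_id.add continuous_const).tendsto _
        · apply Tendsto.div
          · apply Tendsto.const_mul
            exact ((continuous_const.cpow ((continuous_id.add continuous_const).add continuous_const)
              (fun _ => Or.inl (by simpa using hΛ))).tendsto _)
          · exact ((continuous_id.add continuous_const).add continuous_const).tendsto _
          · exact hden
      have : (-(k:ℂ) + (k : ℂ)) * (a j * (Λ : ℂ) ^ (-(k:ℂ) + (j : ℂ) + 1) / (-(k:ℂ) + (j : ℂ) + 1)) = 0 := by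
        simp
      rw [this] at hcont
      exact hcont.mono_left nhdsWithin_le_nhds
  -- combine
  have hfinal := hA.add hB'
  rw [zero_add] at hfinal
  apply hfinal.congr
  intro l
  rw [hG l]
  simp only [hI, hf]
  rw [mul_add, Finset.mul_sum]
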